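/- The game restricted to x-strategies has value 1/e: sup_{x∈[0,1]} inf_{n≥1} p_n(x) = inf_{n≥1} sup_{x∈[0,1]} p_n(x) = 1/e. Moreover, for every probability mass function ν on the positive integers, Σ_{n≥1} ν_n p_n(1/e) > 1/e, so no mixed strategy of the adversary choosing n can hold the 1/e-strategy down to the value 1/e. -/

import Mathlib

open Finset Real Filter Topology

/-- `p_n(x) = 1 - x - Σ_{k=2}^{n} (1-x)^k/(k(k-1))`, the winning probability of the
`x`-strategy with `n` items. -/
noncomputable def pwin (n : ℕ) (x : ℝ) : ℝ :=
  1 - x - ∑ k ∈ Finset.Icc 2 n, (1 - x) ^ k / ((k : ℝ) * ((k : ℝ) - 1))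

namespace Stmt11Aux

/-- The general term of the series. -/
noncomputable def f (x : ℝ) (k : ℕ) : ℝ := (1 - x) ^ k / ((k : ℝ) * ((k : ℝ) - 1))

lemma f_nonneg {x : ℝ} (hx : x ≤ 1) (k : ℕ) : 0 ≤ f x k := by
  apply div_nonneg (pow_nonneg (by linarith) _)
  rcases k with _ | k
  · simp
  · push_cast
    nlinarith [Nat.cast_nonneg (α := ℝ) k]

lemma f_le {x : ℝ} (hx0 : 0 ≤ x) (hx1 : x ≤ 1) (k : ℕ) : f x k ≤ f 0 k := by
  rcases k with _ | _ | k
  · simp [f]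
  · simp [f]
  · unfold f
    have hd : (0:ℝ) < ((k+2 : ℕ) : ℝ) * (((k+2:ℕ) : ℝ) - 1) := by
      push_cast; nlinarith [Nat.cast_nonneg (α := ℝ) k]
    exact div_le_div_of_nonneg_right
      (pow_le_pow_left₀ (by linarith) (by linarith) _) hd.le

lemma sum_range_f (x : ℝ) (n : ℕ) :
    ∑ k ∈ Finset.range (n+1), f x k = ∑ k ∈ Finset.Icc 2 n, f x k := by
  refine (Finset.sum_subset ?_ ?_).symm
  · intro k hk
    simp only [Finset.mem_Icc] at hk
    simp [Finset.mem_range]; omega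
  · intro k hk2 hk
    simp only [Finset.mem_range] at hk2
    simp only [Finset.mem_Icc, not_and_or, not_le] at hk
    have : k < 2 := by omega
    interval_cases k <;> simp [f]

lemma pwin_eq_range (n : ℕ) (x : ℝ) :
    pwin n x = 1 - x - ∑ k ∈ Finset.range (n+1), f x k := by
  rw [sum_range_f]; rfl

lemma telescope : ∀ n : ℕ, 1 ≤ n → ∑ k ∈ Finset.Icc 2 n, f 0 k = 1 - 1/(n:ℝ) := by
  intro n hn
  induction n, hn using Nat.le_induction with
  | base => simp
  | succ n hn ih =>
    rw [Finset.sum_Icc_succ_top (by omega), ih]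
    unfold f
    have h0 : (n:ℝ) ≠ 0 := Nat.cast_ne_zero.2 (by omega)
    have h1 : ((n:ℝ)+1) ≠ 0 := by positivity
    push_cast
    field_simp
    rw [sub_zero, one_pow, add_sub_cancel_right, mul_div_cancel_left₀ _ h0]
    ring


lemma sum_f_le_one {x : ℝ} (hx0 : 0 ≤ x) (hx1 : x ≤ 1) (n : ℕ) :
    ∑ k ∈ Finset.Icc 2 n, f x k ≤ 1 := by
  have h1 : ∑ k ∈ Finset.Icc 2 n, f x k ≤ ∑ k ∈ Finset.Icc 2 n, f 0 k :=
    Finset.sum_le_sum fun k _ => f_le hx0 hx1 k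
  rcases Nat.eq_zero_or_pos n with rfl | hn
  · simpa using h1.trans_eq (by simp)
  · refine h1.trans ?_
    rw [telescope n hn]
    have : 0 ≤ 1/(n:ℝ) := by positivity
    linarith

lemma summable_f0 : Summable (f 0) := by
  apply summable_of_sum_range_le (c := 1) (fun k => f_nonneg (by norm_num) k)
  intro n
  rcases n with _ | n
  · simp
  · rw [sum_range_f]
    exact sum_f_le_one le_rfl zero_le_one n

lemma hasSum_f {x : ℝ} (hx0 : 0 < x) (hx1 : x ≤ 1) :
    HasSum (f x) (1 - x + x * Real.log x) := by
  set t : ℝ := 1 - x with htdef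
  have hlog : Real.log (1 - t) = Real.log x := by rw [htdef]; ring_nf
  have ht : |t| < 1 := by rw [abs_lt]; constructor <;> [skip; skip] <;> simp [htdef] <;> linarith
  have h1 : HasSum (fun j : ℕ => t ^ (j+1) / (j+1)) (-Real.log (1 - t)) :=
    Real.hasSum_pow_div_log_of_abs_lt_one ht
  have h2 := h1.mul_left t
  have h3 : HasSum (fun j : ℕ => t ^ (j+1+1) / (((j+1:ℕ):ℝ)+1)) (-Real.log (1-t) - t) := by
    rw [hasSum_nat_add_iff (f := fun j : ℕ => t ^ (j+1) / ((j:ℝ)+1)) 1]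
    convert h1 using 1
    rfl
    simp
  have h4 := h2.sub h3
  have hfun : (fun j : ℕ => f x (j+2))
      = fun j : ℕ => t * (t^(j+1)/((j:ℝ)+1)) - t^(j+1+1)/(((j+1:ℕ):ℝ)+1) := by
    funext j
    unfold f
    have hj1 : ((j:ℝ)+1) ≠ 0 := by positivity
    have hj2 : ((j:ℝ)+2) ≠ 0 := by positivity
    have hj3 : ((j:ℝ)+2-1) ≠ 0 := by intro h; apply hj1; linarith
    push_cast
    rw [htdef]
    field_simp
    ring
  have h5 : HasSum (fun j : ℕ => f x (j + 2))
      (t * -Real.log (1-t) - (-Real.log (1-t) - t)) := by rw [hfun]; exact h4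
  rw [hasSum_nat_add_iff (f := f x) 2] at h5
  convert h5 using 1
  rfl
  have hs2 : ∑ i ∈ Finset.range 2, f x i = 0 := by
    rw [Finset.sum_range_succ, Finset.sum_range_one]
    norm_num [f]
  rw [hs2, hlog, htdef]
  ring

lemma pwin_ge {x : ℝ} (hx0 : 0 < x) (hx1 : x ≤ 1) (n : ℕ) :
    -(x * Real.log x) ≤ pwin n x := by
  rw [pwin_eq_range]
  have h := sum_le_hasSum (Finset.range (n+1)) (fun i _ => f_nonneg hx1 i)
    (hasSum_f hx0 hx1)
  linarith

lemma pwin_eq_tail {x : ℝ} (hx0 : 0 < x) (hx1 : x ≤ 1) (n : ℕ) :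
    pwin n x = -(x * Real.log x) + ∑' k, f x (k + (n+1)) := by
  have hs : Summable (f x) := (hasSum_f hx0 hx1).summable
  have key := Summable.sum_add_tsum_nat_add (f := f x) (n+1) hs
  have htsum : ∑' k, f x k = 1 - x + x * Real.log x := (hasSum_f hx0 hx1).tsum_eq
  rw [pwin_eq_range]
  rw [htsum] at key
  linarith

lemma tail_le {x : ℝ} (hx0 : 0 < x) (hx1 : x ≤ 1) (m : ℕ) :
    ∑' k, f x (k + m) ≤ ∑' k, f 0 (k + m) := by
  refine Summable.tsum_le_tsum (fun k => f_le hx0.le hx1 _) ?_ ?_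
  · exact (summable_nat_add_iff m).2 (hasSum_f hx0 hx1).summable
  · exact (summable_nat_add_iff m).2 summable_f0

lemma tail0_nonneg (m : ℕ) : 0 ≤ ∑' k, f 0 (k + m) :=
  tsum_nonneg fun k => f_nonneg zero_le_one _

lemma tail0_tendsto : Tendsto (fun i => ∑' k, f 0 (k + i)) atTop (𝓝 0) :=
  tendsto_sum_nat_add (f 0)

lemma pwin_zero {n : ℕ} (hn : 1 ≤ n) : pwin n 0 = 1/(n:ℝ) := by
  have : pwin n 0 = 1 - 0 - ∑ k ∈ Finset.Icc 2 n, f 0 k := by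
    unfold pwin f; norm_num
  rw [this, telescope n hn]
  ring

lemma pwin_le_one_sub {x : ℝ} (hx1 : x ≤ 1) (n : ℕ) : pwin n x ≤ 1 - x := by
  unfold pwin
  have : 0 ≤ ∑ k ∈ Finset.Icc 2 n, (1 - x) ^ k / ((k : ℝ) * ((k : ℝ) - 1)) :=
    Finset.sum_nonneg fun k _ => f_nonneg hx1 k
  linarith

lemma pwin_ge_base {x : ℝ} (hx0 : 0 ≤ x) (hx1 : x ≤ 1) (n : ℕ) : -x ≤ pwin n x := by
  unfold pwin
  have := sum_f_le_one hx0 hx1 n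
  unfold f at this
  linarith

lemma exp1_lt3 : Real.exp 1 < 3 := by
  have := Real.exp_one_lt_d9; linarith

lemma exp1_gt1 : 1 < Real.exp 1 := by
  have := Real.exp_one_gt_d9; linarith

lemma inv_e_pos : 0 < (Real.exp 1)⁻¹ := inv_pos.2 (Real.exp_pos 1)

lemma inv_e_lt_one : (Real.exp 1)⁻¹ < 1 := by
  rw [inv_lt_one_iff₀]; right; exact exp1_gt1

lemma log_inv_e : Real.log (Real.exp 1)⁻¹ = -1 := by
  rw [Real.log_inv, Real.log_exp]

lemma neg_mul_log_inv_e : -((Real.exp 1)⁻¹ * Real.log (Real.exp 1)⁻¹) = (Real.exp 1)⁻¹ := by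
  rw [log_inv_e]; ring

lemma neg_mul_log_le {x : ℝ} (hx0 : 0 ≤ x) : -(x * Real.log x) ≤ (Real.exp 1)⁻¹ := by
  rcases eq_or_lt_of_le hx0 with rfl | hx
  · simp [inv_e_pos.le]
  · have h := Real.add_one_le_exp (-1 - Real.log x)
    rw [Real.exp_sub, Real.exp_neg, Real.exp_log hx] at h
    rw [div_eq_mul_inv, ← Real.exp_neg] at h
    have h2 := mul_le_mul_of_nonneg_left h hx.le
    rw [Real.exp_neg] at h2
    have hx' : x ≠ 0 := ne_of_gt hx
    calc -(x * Real.log x) = x * (-1 - Real.log x + 1) := by ring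
    _ ≤ x * ((Real.exp 1)⁻¹ * x⁻¹) := h2
    _ = (Real.exp 1)⁻¹ := by field_simp

lemma tendsto_pwin {x : ℝ} (hx0 : 0 < x) (hx1 : x ≤ 1) :
    Tendsto (fun n : ℕ => pwin n x) atTop (𝓝 (-(x * Real.log x))) := by
  have h := (tendsto_sum_nat_add (f x)).comp (tendsto_add_atTop_nat 1)
  have h2 := (tendsto_const_nhds (α := ℕ) (x := -(x * Real.log x))).add h
  rw [add_zero] at h2
  exact h2.congr fun n => (pwin_eq_tail hx0 hx1 n).symm

lemma iInf_pwin {x : ℝ} (hx0 : 0 < x) (hx1 : x ≤ 1) :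
    (⨅ n : {n : ℕ // 1 ≤ n}, pwin (n : ℕ) x) = -(x * Real.log x) := by
  have hbdd : BddBelow (Set.range fun n : {n : ℕ // 1 ≤ n} => pwin (n : ℕ) x) :=
    ⟨-(x * Real.log x), by rintro y ⟨n, rfl⟩; exact pwin_ge hx0 hx1 n⟩
  refine le_antisymm ?_ (le_ciInf fun n => pwin_ge hx0 hx1 n)
  refine ge_of_tendsto (tendsto_pwin hx0 hx1) ?_
  filter_upwards [eventually_ge_atTop 1] with n hn
  exact ciInf_le hbdd ⟨n, hn⟩

end Stmt11Aux

open Stmt11Aux in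
/-- The game restricted to `x`-strategies has value `1/e`, yet every mixed strategy of the
adversary (`ν n` the probability of `n+1` items) leaves the `1/e`-strategy strictly above
`1/e`. -/
theorem stmt11 :
    (⨆ x : Set.Icc (0:ℝ) 1, ⨅ n : {n : ℕ // 1 ≤ n}, pwin n x) = (Real.exp 1)⁻¹ ∧
    (⨅ n : {n : ℕ // 1 ≤ n}, ⨆ x : Set.Icc (0:ℝ) 1, pwin n x) = (Real.exp 1)⁻¹ ∧
    (∀ ν : ℕ → ℝ, (∀ n, 0 ≤ ν n) → HasSum ν 1 →
      (Real.exp 1)⁻¹ < ∑' n : ℕ, ν n * pwin (n + 1) (Real.exp 1)⁻¹) := by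
  have hE0 : (0:ℝ) < (Real.exp 1)⁻¹ := inv_e_pos
  have hE1 : (Real.exp 1)⁻¹ < 1 := inv_e_lt_one
  have hmemE : (Real.exp 1)⁻¹ ∈ Set.Icc (0:ℝ) 1 := ⟨hE0.le, hE1.le⟩
  -- Part 1
  have bddBelowR : ∀ x : Set.Icc (0:ℝ) 1,
      BddBelow (Set.range fun n : {n : ℕ // 1 ≤ n} => pwin (n : ℕ) (x : ℝ)) := by
    intro x
    refine ⟨-1, ?_⟩
    rintro y ⟨n, rfl⟩
    have h := pwin_ge_base x.2.1 x.2.2 (n : ℕ)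
    have := x.2.2
    simp only
    linarith
  have hFle : ∀ x : Set.Icc (0:ℝ) 1,
      (⨅ n : {n : ℕ // 1 ≤ n}, pwin (n : ℕ) (x : ℝ)) ≤ (Real.exp 1)⁻¹ := by
    intro x
    rcases eq_or_lt_of_le x.2.1 with h0 | hxpos
    · rw [← h0]
      have hb : BddBelow (Set.range fun n : {n : ℕ // 1 ≤ n} => pwin (n : ℕ) (0:ℝ)) := by
        have := bddBelowR x; rw [← h0] at this; exact this
      have h3 : (⨅ n : {n : ℕ // 1 ≤ n}, pwin (n : ℕ) (0:ℝ)) ≤ pwin 3 (0:ℝ) :=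
        ciInf_le hb ⟨3, by norm_num⟩
      rw [pwin_zero (by norm_num)] at h3
      have h13 : (1:ℝ)/((3:ℕ):ℝ) ≤ (Real.exp 1)⁻¹ := by
        rw [one_div]
        push_cast
        exact inv_anti₀ (Real.exp_pos 1) exp1_lt3.le
      linarith
    · rw [iInf_pwin hxpos x.2.2]
      exact neg_mul_log_le x.2.1
  have part1 : (⨆ x : Set.Icc (0:ℝ) 1, ⨅ n : {n : ℕ // 1 ≤ n}, pwin (n:ℕ) (x:ℝ))
      = (Real.exp 1)⁻¹ := by
    refine le_antisymm (ciSup_le hFle) ?_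
    have bddAboveF : BddAbove (Set.range fun x : Set.Icc (0:ℝ) 1 =>
        ⨅ n : {n : ℕ // 1 ≤ n}, pwin (n:ℕ) (x:ℝ)) := by
      refine ⟨(Real.exp 1)⁻¹, ?_⟩
      rintro y ⟨x, rfl⟩
      exact hFle x
    have hx0val : (⨅ n : {n : ℕ // 1 ≤ n}, pwin (n:ℕ) ((⟨(Real.exp 1)⁻¹, hmemE⟩ :
        Set.Icc (0:ℝ) 1) : ℝ)) = (Real.exp 1)⁻¹ := by
      rw [iInf_pwin hE0 hE1.le]
      exact neg_mul_log_inv_e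
    calc (Real.exp 1)⁻¹ = _ := hx0val.symm
    _ ≤ _ := le_ciSup bddAboveF (⟨(Real.exp 1)⁻¹, hmemE⟩ : Set.Icc (0:ℝ) 1)
  -- Part 2
  have bddAboveX : ∀ m : ℕ,
      BddAbove (Set.range fun x : Set.Icc (0:ℝ) 1 => pwin m (x : ℝ)) := by
    intro m
    refine ⟨1, ?_⟩
    rintro y ⟨x, rfl⟩
    have h := pwin_le_one_sub x.2.2 m
    have := x.2.1
    simp only
    linarith
  have hGge : ∀ n : {n : ℕ // 1 ≤ n},
      (Real.exp 1)⁻¹ ≤ ⨆ x : Set.Icc (0:ℝ) 1, pwin (n : ℕ) (x : ℝ) := by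
    intro n
    have h1 : (Real.exp 1)⁻¹ ≤ pwin (n : ℕ) (Real.exp 1)⁻¹ := by
      have := pwin_ge hE0 hE1.le (n : ℕ)
      rw [neg_mul_log_inv_e] at this
      exact this
    exact h1.trans (le_ciSup (bddAboveX (n : ℕ)) (⟨(Real.exp 1)⁻¹, hmemE⟩ : Set.Icc (0:ℝ) 1))
  have part2 : (⨅ n : {n : ℕ // 1 ≤ n}, ⨆ x : Set.Icc (0:ℝ) 1, pwin (n:ℕ) (x:ℝ))
      = (Real.exp 1)⁻¹ := by
    refine le_antisymm ?_ (le_ciInf hGge)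
    have bddBelowG : BddBelow (Set.range fun n : {n : ℕ // 1 ≤ n} =>
        ⨆ x : Set.Icc (0:ℝ) 1, pwin (n:ℕ) (x:ℝ)) := by
      refine ⟨(Real.exp 1)⁻¹, ?_⟩
      rintro y ⟨n, rfl⟩
      exact hGge n
    have hGle : ∀ m : ℕ, 1 ≤ m → (⨆ x : Set.Icc (0:ℝ) 1, pwin m (x:ℝ))
        ≤ (Real.exp 1)⁻¹ + (∑' k, f 0 (k + (m+1))) + 1/(m:ℝ) := by
      intro m hm
      apply ciSup_le
      intro x
      have htn := tail0_nonneg (m+1)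
      have h1m : (0:ℝ) ≤ 1/(m:ℝ) := by positivity
      rcases eq_or_lt_of_le x.2.1 with h0 | hxpos
      · have hx : pwin m (x:ℝ) = 1/(m:ℝ) := by rw [← h0, pwin_zero hm]
        linarith
      · have h1 := pwin_eq_tail hxpos x.2.2 m
        have h2 := tail_le hxpos x.2.2 (m+1)
        have h3 := neg_mul_log_le x.2.1
        linarith
    have hseq : ∀ n : ℕ, (⨅ n : {n : ℕ // 1 ≤ n}, ⨆ x : Set.Icc (0:ℝ) 1, pwin (n:ℕ) (x:ℝ))
        ≤ (Real.exp 1)⁻¹ + (∑' k, f 0 (k + (n+1+1))) + 1/((n+1:ℕ):ℝ) := fun n =>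
      (ciInf_le bddBelowG ⟨n+1, Nat.le_add_left 1 n⟩).trans (hGle (n+1) (Nat.le_add_left 1 n))
    have t1 : Tendsto (fun n : ℕ => ∑' k, f 0 (k + (n+1+1))) atTop (𝓝 0) := by
      have := tail0_tendsto.comp (tendsto_add_atTop_nat 2)
      refine this.congr fun n => ?_
      simp only [Function.comp]
    have t2 : Tendsto (fun n : ℕ => 1/((n+1:ℕ):ℝ)) atTop (𝓝 0) := by
      have := (tendsto_one_div_atTop_nhds_zero_nat (𝕜 := ℝ)).comp (tendsto_add_atTop_nat 1)
      exact this.congr fun n => by simp [Function.comp]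
    have t3 := ((tendsto_const_nhds (α := ℕ) (x := (Real.exp 1)⁻¹)).add t1).add t2
    rw [add_zero, add_zero] at t3
    exact ge_of_tendsto t3 (Filter.Eventually.of_forall hseq)
  -- Part 3
  have part3 : ∀ ν : ℕ → ℝ, (∀ n, 0 ≤ ν n) → HasSum ν 1 →
      (Real.exp 1)⁻¹ < ∑' n : ℕ, ν n * pwin (n + 1) (Real.exp 1)⁻¹ := by
    intro ν hν0 hν
    have hpwin_gt : ∀ m : ℕ, (Real.exp 1)⁻¹ < pwin (m + 1) (Real.exp 1)⁻¹ := by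
      intro m
      have heq := pwin_eq_tail hE0 hE1.le (m+1)
      rw [neg_mul_log_inv_e] at heq
      have hsum : Summable fun k => f (Real.exp 1)⁻¹ (k + (m+1+1)) :=
        (summable_nat_add_iff (m+1+1)).2 (hasSum_f hE0 hE1.le).summable
      have hterm : 0 < f (Real.exp 1)⁻¹ (0 + (m+1+1)) := by
        unfold f
        apply div_pos (pow_pos (by linarith) _)
        push_cast
        nlinarith [Nat.cast_nonneg (α := ℝ) m]
      have htail : f (Real.exp 1)⁻¹ (0 + (m+1+1)) ≤ ∑' k, f (Real.exp 1)⁻¹ (k + (m+1+1)) :=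
        Summable.le_tsum hsum 0 fun j _ => f_nonneg hE1.le _
      linarith
    have hpwin_le1 : ∀ m : ℕ, pwin (m + 1) (Real.exp 1)⁻¹ ≤ 1 := fun m => by
      have := pwin_le_one_sub hE1.le (m+1); linarith
    have hsumg : Summable fun n => ν n * pwin (n + 1) (Real.exp 1)⁻¹ := by
      refine Summable.of_nonneg_of_le (fun n => ?_) (fun n => ?_) hν.summable
      · exact mul_nonneg (hν0 n) ((hE0.trans (hpwin_gt n)).le)
      · calc ν n * pwin (n + 1) (Real.exp 1)⁻¹ ≤ ν n * 1 :=
            mul_le_mul_of_nonneg_left (hpwin_le1 n) (hν0 n)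
        _ = ν n := mul_one _
    have hex : ∃ m, 0 < ν m := by
      by_contra h
      push_neg at h
      have hz : ν = fun _ => 0 := funext fun n => le_antisymm (h n) (hν0 n)
      rw [hz] at hν
      exact one_ne_zero (hν.unique hasSum_zero)
    obtain ⟨m, hm⟩ := hex
    have hlt : (∑' n, ν n * (Real.exp 1)⁻¹) < ∑' n, ν n * pwin (n + 1) (Real.exp 1)⁻¹ := by
      refine Summable.tsum_lt_tsum (i := m) (fun n => ?_) ?_ ?_ hsumg
      · exact mul_le_mul_of_nonneg_left (hpwin_gt n).le (hν0 n)
      · exact (mul_lt_mul_iff_right₀ hm).2 (hpwin_gt m)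
      · exact hν.summable.mul_right _
    have heq : (∑' n, ν n * (Real.exp 1)⁻¹) = (Real.exp 1)⁻¹ := by
      rw [tsum_mul_right, hν.tsum_eq, one_mul]
    linarith
  exact ⟨part1, part2, part3⟩
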